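/- For every integer n ≥ 1, b(n) > a(n); that is, the difference sequence b − a is positive. -/

import Mathlib

/-- `a n` is the `n`-th positive integer `k` (1-indexed, in increasing order) such that
the fractional part `{k·√2}` is less than `1/2`. -/
noncomputable def a (n : ℕ) : ℕ :=
  Nat.nth (fun k => 0 < k ∧ Int.fract ((k : ℝ) * Real.sqrt 2) < 1 / 2) (n - 1)

/-- `b n` is the `n`-th positive integer `k` (1-indexed, in increasing order) such that
the fractional part `{k·√2}` is at least `1/2`. -/
noncomputable def b (n : ℕ) : ℕ :=
  Nat.nth (fun k => 0 < k ∧ 1 / 2 ≤ Int.fract ((k : ℝ) * Real.sqrt 2)) (n - 1)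


noncomputable def rr : ℝ := Real.sqrt 2

lemma rr_sq : rr * rr = 2 := Real.mul_self_sqrt (by norm_num)

lemma rr_pos : 0 < rr := Real.sqrt_pos.mpr (by norm_num)

lemma rr_lb : 1.414213 < rr := by nlinarith [rr_sq, rr_pos]

lemma rr_ub : rr < 1.414214 := by nlinarith [rr_sq, rr_pos]

lemma fract_eval (y x : ℝ) (c : ℤ) (h : y = c + x) (h0 : 0 ≤ x) (h1 : x < 1) :
    Int.fract y = x := by
  rw [h, Int.fract_intCast_add, Int.fract_eq_self.mpr ⟨h0, h1⟩]

noncomputable def sg (n : ℕ) : ℤ :=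
  if Int.fract ((n : ℝ) * rr) < 1/2 then 1 else -1

noncomputable def f : ℕ → ℤ
  | 0 => 0
  | n + 1 => f n + sg (n + 1)

noncomputable def KK (k : ℕ) : ℕ := 3 * k + 2 * (⌊(k : ℝ) * rr⌋).toNat

lemma floor_nonneg' (k : ℕ) : 0 ≤ ⌊(k : ℝ) * rr⌋ :=
  Int.floor_nonneg.mpr (mul_nonneg (Nat.cast_nonneg k) rr_pos.le)

lemma KK_cast (k : ℕ) : ((KK k : ℕ) : ℝ) = 3 * k + 2 * (⌊(k : ℝ) * rr⌋ : ℝ) := by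
  have hcast : ((⌊(k : ℝ) * rr⌋.toNat : ℕ) : ℝ) = ((⌊(k : ℝ) * rr⌋ : ℤ) : ℝ) := by
    exact_mod_cast congrArg (Int.cast : ℤ → ℝ) (Int.toNat_of_nonneg (floor_nonneg' k))
  unfold KK
  rw [Nat.cast_add, Nat.cast_mul, Nat.cast_mul, hcast]
  norm_num

lemma KK_identity (k o : ℕ) :
    ((KK k + o : ℕ) : ℝ) * rr =
      ((4 * k + 3 * ⌊(k : ℝ) * rr⌋ + o : ℤ) : ℝ)
        + ((3 - 2*rr) * Int.fract ((k : ℝ) * rr) + o * (rr - 1)) := by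
  push_cast
  rw [KK_cast]
  rw [Int.fract]
  push_cast
  nlinarith [rr_sq]

lemma sg_pos {n : ℕ} (h : Int.fract ((n : ℝ) * rr) < 1/2) : sg n = 1 := if_pos h

lemma sg_neg {n : ℕ} (h : 1/2 ≤ Int.fract ((n : ℝ) * rr)) : sg n = -1 :=
  if_neg (not_lt.mpr h)

lemma fract_KK (k o : ℕ) (t : ℤ)
    (h0 : 0 ≤ (3 - 2*rr) * Int.fract ((k : ℝ) * rr) + (o : ℝ) * (rr - 1) - (t : ℝ))
    (h1 : (3 - 2*rr) * Int.fract ((k : ℝ) * rr) + (o : ℝ) * (rr - 1) - (t : ℝ) < 1) :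
    Int.fract (((KK k + o : ℕ) : ℝ) * rr)
      = (3 - 2*rr) * Int.fract ((k : ℝ) * rr) + (o : ℝ) * (rr - 1) - (t : ℝ) := by
  apply fract_eval _ _ (4 * k + 3 * ⌊(k : ℝ) * rr⌋ + o + t) _ h0 h1
  rw [KK_identity k o]
  push_cast
  ring

lemma dpos : (0:ℝ) < 3 - 2*rr := by nlinarith [rr_ub]

section blocks
variable (k : ℕ)

lemma frK0 : Int.fract (((KK k + 0 : ℕ) : ℝ) * rr) < 1/2 := by
  have h0 := Int.fract_nonneg ((k : ℝ) * rr)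
  have h1 := Int.fract_lt_one ((k : ℝ) * rr)
  have hb0 : 0 ≤ (3 - 2*rr) * Int.fract ((k : ℝ) * rr) + ((0:ℕ) : ℝ) * (rr - 1) - ((0:ℤ) : ℝ) := by
    push_cast; nlinarith [dpos]
  have hb1 : (3 - 2*rr) * Int.fract ((k : ℝ) * rr) + ((0:ℕ) : ℝ) * (rr - 1) - ((0:ℤ) : ℝ) < 1 := by
    push_cast; nlinarith [dpos, rr_lb]
  have hf := fract_KK k 0 0 hb0 hb1
  rw [hf]; push_cast; nlinarith [dpos, rr_lb]

lemma frK1a (hc : Int.fract ((k : ℝ) * rr) < 1/2) : Int.fract (((KK k + 1 : ℕ) : ℝ) * rr) < 1/2 := by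
  have h0 := Int.fract_nonneg ((k : ℝ) * rr)
  have hb0 : 0 ≤ (3 - 2*rr) * Int.fract ((k : ℝ) * rr) + ((1:ℕ) : ℝ) * (rr - 1) - ((0:ℤ) : ℝ) := by
    push_cast; nlinarith [dpos, rr_lb]
  have hb1 : (3 - 2*rr) * Int.fract ((k : ℝ) * rr) + ((1:ℕ) : ℝ) * (rr - 1) - ((0:ℤ) : ℝ) < 1 := by
    push_cast; nlinarith [dpos, rr_ub, rr_lb]
  have hf := fract_KK k 1 0 hb0 hb1
  rw [hf]; push_cast
  nlinarith [mul_pos (by linarith : (0:ℝ) < 1/2 - Int.fract ((k : ℝ) * rr)) dpos]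

lemma frK1b (hc : 1/2 ≤ Int.fract ((k : ℝ) * rr)) : 1/2 ≤ Int.fract (((KK k + 1 : ℕ) : ℝ) * rr) := by
  have h1 := Int.fract_lt_one ((k : ℝ) * rr)
  have hb0 : 0 ≤ (3 - 2*rr) * Int.fract ((k : ℝ) * rr) + ((1:ℕ) : ℝ) * (rr - 1) - ((0:ℤ) : ℝ) := by
    push_cast; nlinarith [dpos, rr_lb]
  have hb1 : (3 - 2*rr) * Int.fract ((k : ℝ) * rr) + ((1:ℕ) : ℝ) * (rr - 1) - ((0:ℤ) : ℝ) < 1 := by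
    push_cast; nlinarith [dpos, rr_ub, rr_lb]
  have hf := fract_KK k 1 0 hb0 hb1
  rw [hf]; push_cast
  nlinarith [mul_nonneg (by linarith : (0:ℝ) ≤ Int.fract ((k : ℝ) * rr) - 1/2) dpos.le]

lemma frK2 : 1/2 ≤ Int.fract (((KK k + 2 : ℕ) : ℝ) * rr) := by
  have h0 := Int.fract_nonneg ((k : ℝ) * rr)
  have h1 := Int.fract_lt_one ((k : ℝ) * rr)
  have hb0 : 0 ≤ (3 - 2*rr) * Int.fract ((k : ℝ) * rr) + ((2:ℕ) : ℝ) * (rr - 1) - ((0:ℤ) : ℝ) := by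
    push_cast; nlinarith [dpos, rr_lb]
  have hb1 : (3 - 2*rr) * Int.fract ((k : ℝ) * rr) + ((2:ℕ) : ℝ) * (rr - 1) - ((0:ℤ) : ℝ) < 1 := by
    push_cast; nlinarith [mul_pos (by linarith : (0:ℝ) < 1 - Int.fract ((k : ℝ) * rr)) dpos]
  have hf := fract_KK k 2 0 hb0 hb1
  rw [hf]; push_cast; nlinarith [dpos, rr_lb]

lemma frK3 : Int.fract (((KK k + 3 : ℕ) : ℝ) * rr) < 1/2 := by
  have h0 := Int.fract_nonneg ((k : ℝ) * rr)
  have h1 := Int.fract_lt_one ((k : ℝ) * rr)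
  have hb0 : 0 ≤ (3 - 2*rr) * Int.fract ((k : ℝ) * rr) + ((3:ℕ) : ℝ) * (rr - 1) - ((1:ℤ) : ℝ) := by
    push_cast; nlinarith [dpos, rr_lb]
  have hb1 : (3 - 2*rr) * Int.fract ((k : ℝ) * rr) + ((3:ℕ) : ℝ) * (rr - 1) - ((1:ℤ) : ℝ) < 1 := by
    push_cast; nlinarith [dpos, rr_ub]
  have hf := fract_KK k 3 1 hb0 hb1
  rw [hf]; push_cast; nlinarith [dpos, rr_ub]

lemma frK4 : 1/2 ≤ Int.fract (((KK k + 4 : ℕ) : ℝ) * rr) := by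
  have h0 := Int.fract_nonneg ((k : ℝ) * rr)
  have h1 := Int.fract_lt_one ((k : ℝ) * rr)
  have hb0 : 0 ≤ (3 - 2*rr) * Int.fract ((k : ℝ) * rr) + ((4:ℕ) : ℝ) * (rr - 1) - ((1:ℤ) : ℝ) := by
    push_cast; nlinarith [dpos, rr_lb]
  have hb1 : (3 - 2*rr) * Int.fract ((k : ℝ) * rr) + ((4:ℕ) : ℝ) * (rr - 1) - ((1:ℤ) : ℝ) < 1 := by
    push_cast; nlinarith [dpos, rr_ub]
  have hf := fract_KK k 4 1 hb0 hb1
  rw [hf]; push_cast; nlinarith [dpos, rr_lb]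

lemma frK5 (hc : 2 - rr ≤ Int.fract ((k : ℝ) * rr)) : Int.fract (((KK k + 5 : ℕ) : ℝ) * rr) < 1/2 := by
  have h1 := Int.fract_lt_one ((k : ℝ) * rr)
  have hmul : (0:ℝ) ≤ (Int.fract ((k : ℝ) * rr) - (2 - rr)) * (3 - 2*rr) :=
    mul_nonneg (by linarith) dpos.le
  have hb0 : 0 ≤ (3 - 2*rr) * Int.fract ((k : ℝ) * rr) + ((5:ℕ) : ℝ) * (rr - 1) - ((2:ℤ) : ℝ) := by
    push_cast; nlinarith [rr_lb, rr_ub, rr_sq]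
  have hb1 : (3 - 2*rr) * Int.fract ((k : ℝ) * rr) + ((5:ℕ) : ℝ) * (rr - 1) - ((2:ℤ) : ℝ) < 1 := by
    push_cast; nlinarith [dpos, rr_ub]
  have hf := fract_KK k 5 2 hb0 hb1
  rw [hf]; push_cast; nlinarith [dpos, rr_ub]

lemma frK6 (hc : 2 - rr ≤ Int.fract ((k : ℝ) * rr)) : 1/2 ≤ Int.fract (((KK k + 6 : ℕ) : ℝ) * rr) := by
  have h1 := Int.fract_lt_one ((k : ℝ) * rr)
  have hmul : (0:ℝ) ≤ (Int.fract ((k : ℝ) * rr) - (2 - rr)) * (3 - 2*rr) :=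
    mul_nonneg (by linarith) dpos.le
  have hb0 : 0 ≤ (3 - 2*rr) * Int.fract ((k : ℝ) * rr) + ((6:ℕ) : ℝ) * (rr - 1) - ((2:ℤ) : ℝ) := by
    push_cast; nlinarith [rr_lb, rr_ub, rr_sq]
  have hb1 : (3 - 2*rr) * Int.fract ((k : ℝ) * rr) + ((6:ℕ) : ℝ) * (rr - 1) - ((2:ℤ) : ℝ) < 1 := by
    push_cast; nlinarith [dpos, rr_ub]
  have hf := fract_KK k 6 2 hb0 hb1
  rw [hf]; push_cast
  nlinarith [hmul, rr_lb, rr_ub, rr_sq]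

lemma KK_step_a (hc : Int.fract ((k : ℝ) * rr) < 2 - rr) : KK (k+1) = KK k + 5 := by
  have h0 := Int.fract_nonneg ((k : ℝ) * rr)
  have hfl : ⌊((k+1 : ℕ) : ℝ) * rr⌋ = ⌊(k : ℝ) * rr⌋ + 1 := by
    have he : ((k+1 : ℕ) : ℝ) * rr = (⌊(k : ℝ) * rr⌋ : ℝ) + (Int.fract ((k : ℝ) * rr) + rr) := by
      push_cast [Int.fract]; ring
    rw [he, Int.floor_intCast_add]
    have h2 : ⌊Int.fract ((k : ℝ) * rr) + rr⌋ = 1 := by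
      apply Int.floor_eq_iff.mpr
      refine ⟨by push_cast; nlinarith [rr_lb], by push_cast; nlinarith [rr_lb]⟩
    omega
  have hn := floor_nonneg' k
  unfold KK
  rw [hfl]
  omega

lemma KK_step_b (hc : 2 - rr ≤ Int.fract ((k : ℝ) * rr)) : KK (k+1) = KK k + 7 := by
  have h1 := Int.fract_lt_one ((k : ℝ) * rr)
  have hfl : ⌊((k+1 : ℕ) : ℝ) * rr⌋ = ⌊(k : ℝ) * rr⌋ + 2 := by
    have he : ((k+1 : ℕ) : ℝ) * rr = (⌊(k : ℝ) * rr⌋ : ℝ) + (Int.fract ((k : ℝ) * rr) + rr) := by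
      push_cast [Int.fract]; ring
    rw [he, Int.floor_intCast_add]
    have h2 : ⌊Int.fract ((k : ℝ) * rr) + rr⌋ = 2 := by
      apply Int.floor_eq_iff.mpr
      refine ⟨by push_cast; nlinarith [rr_lb], by push_cast; nlinarith [rr_ub]⟩
    omega
  have hn := floor_nonneg' k
  unfold KK
  rw [hfl]
  omega

end blocks

lemma sgK0 (k : ℕ) : sg (KK k + 0) = 1 := sg_pos (frK0 k)
lemma sgK1a (k : ℕ) (hc : Int.fract ((k : ℝ) * rr) < 1/2) : sg (KK k + 1) = 1 := sg_pos (frK1a k hc)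
lemma sgK1b (k : ℕ) (hc : 1/2 ≤ Int.fract ((k : ℝ) * rr)) : sg (KK k + 1) = -1 := sg_neg (frK1b k hc)
lemma sgK2 (k : ℕ) : sg (KK k + 2) = -1 := sg_neg (frK2 k)
lemma sgK3 (k : ℕ) : sg (KK k + 3) = 1 := sg_pos (frK3 k)
lemma sgK4 (k : ℕ) : sg (KK k + 4) = -1 := sg_neg (frK4 k)
lemma sgK5 (k : ℕ) (hc : 2 - rr ≤ Int.fract ((k : ℝ) * rr)) : sg (KK k + 5) = 1 := sg_pos (frK5 k hc)
lemma sgK6 (k : ℕ) (hc : 2 - rr ≤ Int.fract ((k : ℝ) * rr)) : sg (KK k + 6) = -1 := sg_neg (frK6 k hc)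

lemma f_succ (n : ℕ) : f (n + 1) = f n + sg (n + 1) := rfl

lemma KK_ge (k : ℕ) : 5 * k ≤ KK k := by
  have hk : (k : ℤ) ≤ ⌊(k : ℝ) * rr⌋ := by
    apply Int.le_floor.mpr
    push_cast
    nlinarith [rr_lb, (Nat.cast_nonneg k : (0:ℝ) ≤ k)]
  unfold KK
  omega

lemma KK_one : KK 1 = 5 := by
  have h : ⌊rr⌋ = 1 := by
    apply Int.floor_eq_iff.mpr
    constructor
    · push_cast; nlinarith [rr_lb]
    · push_cast; nlinarith [rr_ub]
  unfold KK
  norm_num [h]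

lemma fract_nat (n : ℕ) (c : ℤ) : Int.fract ((n : ℝ) * rr) = (n : ℝ) * rr - c
    ∨ True := Or.inr trivial

lemma fract1 : Int.fract (((1:ℕ) : ℝ) * rr) < 1/2 := by
  have h := fract_eval (((1:ℕ) : ℝ) * rr) (((1:ℕ) : ℝ) * rr - 1) 1
    (by push_cast; ring) (by push_cast; nlinarith [rr_lb]) (by push_cast; nlinarith [rr_ub])
  rw [h]; push_cast; nlinarith [rr_ub]

lemma fract2 : 1/2 ≤ Int.fract (((2:ℕ) : ℝ) * rr) := by
  have h := fract_eval (((2:ℕ) : ℝ) * rr) (((2:ℕ) : ℝ) * rr - 2) 2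
    (by push_cast; ring) (by push_cast; nlinarith [rr_lb]) (by push_cast; nlinarith [rr_ub])
  rw [h]; push_cast; nlinarith [rr_lb]

lemma fract3 : Int.fract (((3:ℕ) : ℝ) * rr) < 1/2 := by
  have h := fract_eval (((3:ℕ) : ℝ) * rr) (((3:ℕ) : ℝ) * rr - 4) 4
    (by push_cast; ring) (by push_cast; nlinarith [rr_lb]) (by push_cast; nlinarith [rr_ub])
  rw [h]; push_cast; nlinarith [rr_ub]

lemma fract4 : 1/2 ≤ Int.fract (((4:ℕ) : ℝ) * rr) := by
  have h := fract_eval (((4:ℕ) : ℝ) * rr) (((4:ℕ) : ℝ) * rr - 5) 5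
    (by push_cast; ring) (by push_cast; nlinarith [rr_lb]) (by push_cast; nlinarith [rr_ub])
  rw [h]; push_cast; nlinarith [rr_lb]

lemma fract5 : Int.fract (((5:ℕ) : ℝ) * rr) < 1/2 := by
  have h := fract_eval (((5:ℕ) : ℝ) * rr) (((5:ℕ) : ℝ) * rr - 7) 7
    (by push_cast; ring) (by push_cast; nlinarith [rr_lb]) (by push_cast; nlinarith [rr_ub])
  rw [h]; push_cast; nlinarith [rr_ub]

lemma fval0 : f 0 = 0 := rfl

lemma fval1 : f 1 = 1 := by
  have := f_succ 0
  rw [this, fval0, sg_pos fract1] <;> norm_num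

lemma fval2 : f 2 = 0 := by
  have := f_succ 1
  rw [this, fval1, sg_neg fract2]
  norm_num

lemma fval3 : f 3 = 1 := by
  have := f_succ 2
  rw [this, fval2, sg_pos fract3] <;> norm_num

lemma fval4 : f 4 = 0 := by
  have := f_succ 3
  rw [this, fval3, sg_neg fract4]
  norm_num

lemma half_le : (1:ℝ)/2 ≤ 2 - rr := by nlinarith [rr_ub]

lemma fid : ∀ k, 1 ≤ k → f (KK k - 1) = f (k - 1) := by
  intro k hk
  induction k, hk using Nat.le_induction with
  | base =>
      rw [KK_one]
      show f 4 = f 0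
      rw [fval4, fval0]
  | succ k hk ih =>
      have hge := KK_ge k
      have hpos : 1 ≤ KK k := by omega
      have hx : KK k - 1 + 1 = KK k := by omega
      have e0 : f (KK k) = f (KK k - 1) + sg (KK k) := by
        conv_lhs => rw [← hx]
        rw [f_succ, hx]
      have e1 : f (KK k + 1) = f (KK k) + sg (KK k + 1) := f_succ _
      have e2 : f (KK k + 2) = f (KK k + 1) + sg (KK k + 2) := by
        rw [show KK k + 2 = KK k + 1 + 1 by omega]; exact f_succ _
      have e3 : f (KK k + 3) = f (KK k + 2) + sg (KK k + 3) := by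
        rw [show KK k + 3 = KK k + 2 + 1 by omega]; exact f_succ _
      have e4 : f (KK k + 4) = f (KK k + 3) + sg (KK k + 4) := by
        rw [show KK k + 4 = KK k + 3 + 1 by omega]; exact f_succ _
      have hk1 : f k = f (k - 1) + sg k := by
        have h := f_succ (k - 1)
        rwa [show k - 1 + 1 = k by omega] at h
      have hK0 : sg (KK k) = 1 := by have := sgK0 k; rwa [Nat.add_zero] at this
      by_cases hc : Int.fract ((k : ℝ) * rr) < 2 - rr
      · have hlen := KK_step_a k hc
        rw [hlen, show KK k + 5 - 1 = KK k + 4 by omega, Nat.add_sub_cancel]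
        by_cases hc1 : Int.fract ((k : ℝ) * rr) < 1/2
        · rw [e4, e3, e2, e1, e0, ih, hK0, sgK1a k hc1, sgK2, sgK3, sgK4, hk1,
            sg_pos hc1]
          ring
        · rw [e4, e3, e2, e1, e0, ih, hK0, sgK1b k (not_lt.mp hc1), sgK2, sgK3, sgK4, hk1,
            sg_neg (not_lt.mp hc1)]
          ring
      · have hc' : 2 - rr ≤ Int.fract ((k : ℝ) * rr) := not_lt.mp hc
        have hc1 : 1/2 ≤ Int.fract ((k : ℝ) * rr) := le_trans half_le hc'
        have hlen := KK_step_b k hc'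
        rw [hlen, show KK k + 7 - 1 = KK k + 6 by omega, Nat.add_sub_cancel]
        have e5 : f (KK k + 5) = f (KK k + 4) + sg (KK k + 5) := by
          rw [show KK k + 5 = KK k + 4 + 1 by omega]; exact f_succ _
        have e6 : f (KK k + 6) = f (KK k + 5) + sg (KK k + 6) := by
          rw [show KK k + 6 = KK k + 5 + 1 by omega]; exact f_succ _
        rw [e6, e5, e4, e3, e2, e1, e0, ih, hK0, sgK1b k hc1, sgK2, sgK3, sgK4,
          sgK5 k hc', sgK6 k hc', hk1, sg_neg hc1]
        ring

lemma fract1p : Int.fract rr < 1/2 := by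
  have h := fract_eval rr (rr - 1) 1 (by push_cast; ring) (by nlinarith [rr_lb]) (by nlinarith [rr_ub])
  rw [h]; nlinarith [rr_ub]

lemma fract3p : Int.fract ((3:ℝ) * rr) < 1/2 := by
  have h := fract_eval ((3:ℝ) * rr) (3 * rr - 4) 4 (by push_cast; ring) (by nlinarith [rr_lb]) (by nlinarith [rr_ub])
  rw [h]; nlinarith [rr_ub]

lemma fract5p : Int.fract ((5:ℝ) * rr) < 1/2 := by
  have h := fract_eval ((5:ℝ) * rr) (5 * rr - 7) 7 (by push_cast; ring) (by nlinarith [rr_lb]) (by nlinarith [rr_ub])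
  rw [h]; nlinarith [rr_ub]

lemma fmain : ∀ N, 0 ≤ f N ∧ (1/2 ≤ Int.fract (((N+1 : ℕ) : ℝ) * rr) → 1 ≤ f N) := by
  intro N
  induction N using Nat.strong_induction_on with
  | _ N IH =>
  by_cases hsmall : N ≤ 4
  · interval_cases N
    · exact ⟨by rw [fval0], fun h => absurd h (not_le.mpr (by norm_num [fract1p]))⟩
    · exact ⟨by rw [fval1]; norm_num, fun _ => by rw [fval1]⟩
    · exact ⟨by rw [fval2], fun h => absurd h (not_le.mpr (by norm_num [fract3p]))⟩
    · exact ⟨by rw [fval3]; norm_num, fun _ => by rw [fval3]⟩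
    · exact ⟨by rw [fval4], fun h => absurd h (not_le.mpr (by norm_num [fract5p]))⟩
  · push_neg at hsmall
    have hex : ∃ k, 1 ≤ k ∧ KK k ≤ N ∧ N < KK (k+1) := by
      have h1le : KK 1 ≤ N := by rw [KK_one]; omega
      refine ⟨Nat.findGreatest (fun j => KK j ≤ N) N, ?_, ?_, ?_⟩
      · exact Nat.le_findGreatest (by omega) h1le
      · exact Nat.findGreatest_spec (P := fun j => KK j ≤ N) (m := 1) (n := N) (by omega) h1le
      · have hkge1 : 1 ≤ Nat.findGreatest (fun j => KK j ≤ N) N :=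
          Nat.le_findGreatest (by omega) h1le
        have hspec : KK (Nat.findGreatest (fun j => KK j ≤ N) N) ≤ N :=
          Nat.findGreatest_spec (P := fun j => KK j ≤ N) (m := 1) (n := N) (by omega) h1le
        have hge := KK_ge (Nat.findGreatest (fun j => KK j ≤ N) N)
        by_contra hcon
        push_neg at hcon
        exact Nat.findGreatest_is_greatest
          (Nat.lt_succ_self (Nat.findGreatest (fun j => KK j ≤ N) N)) (by omega) hcon
    obtain ⟨k, hkge1, hspec, hnext⟩ := hex
    have hge := KK_ge k
    have hklt : k < N := by omega
    have fid' : f (KK k - 1) = f (k - 1) := fid k hkge1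
    have IHk := IH (k - 1) (by omega)
    have IH1 : 0 ≤ f (k - 1) := IHk.1
    have IH2 : 1/2 ≤ Int.fract ((k : ℝ) * rr) → 1 ≤ f (k - 1) := by
      have h := IHk.2
      rwa [show k - 1 + 1 = k by omega] at h
    have hpos : 1 ≤ KK k := by omega
    have hx : KK k - 1 + 1 = KK k := by omega
    have e0 : f (KK k) = f (KK k - 1) + sg (KK k) := by
      conv_lhs => rw [← hx]
      rw [f_succ, hx]
    have e1 : f (KK k + 1) = f (KK k) + sg (KK k + 1) := f_succ _
    have e2 : f (KK k + 2) = f (KK k + 1) + sg (KK k + 2) := by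
      rw [show KK k + 2 = KK k + 1 + 1 by omega]; exact f_succ _
    have e3 : f (KK k + 3) = f (KK k + 2) + sg (KK k + 3) := by
      rw [show KK k + 3 = KK k + 2 + 1 by omega]; exact f_succ _
    have e4 : f (KK k + 4) = f (KK k + 3) + sg (KK k + 4) := by
      rw [show KK k + 4 = KK k + 3 + 1 by omega]; exact f_succ _
    have hK0 : sg (KK k) = 1 := by have := sgK0 k; rwa [Nat.add_zero] at this
    have v0 : f (KK k) = f (k - 1) + 1 := by rw [e0, hK0, fid']
    by_cases hc : Int.fract ((k : ℝ) * rr) < 2 - rr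
    · have hlen := KK_step_a k hc
      have hco : N < KK k + 5 := by omega
      by_cases hc1 : Int.fract ((k : ℝ) * rr) < 1/2
      · -- block AABAB
        have v1 : f (KK k + 1) = f (k - 1) + 2 := by rw [e1, v0, sgK1a k hc1]; ring
        have v2 : f (KK k + 2) = f (k - 1) + 1 := by rw [e2, v1, sgK2]; ring
        have v3 : f (KK k + 3) = f (k - 1) + 2 := by rw [e3, v2, sgK3]; ring
        have v4 : f (KK k + 4) = f (k - 1) + 1 := by rw [e4, v3, sgK4]; ring
        rcases (by omega : N = KK k ∨ N = KK k + 1 ∨ N = KK k + 2 ∨ N = KK k + 3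
          ∨ N = KK k + 4) with h|h|h|h|h <;> subst h
        · exact ⟨by linarith, fun h => absurd h (not_le.mpr (frK1a k hc1))⟩
        · exact ⟨by linarith, fun _ => by linarith⟩
        · exact ⟨by linarith, fun h => absurd h (not_le.mpr (frK3 k))⟩
        · exact ⟨by linarith, fun _ => by linarith⟩
        · refine ⟨by linarith, fun h => ?_⟩
          rw [show KK k + 4 + 1 = KK (k+1) + 0 by omega] at h
          exact absurd h (not_le.mpr (frK0 (k+1)))
      · -- block ABBAB
        have hcb : 1/2 ≤ Int.fract ((k : ℝ) * rr) := not_lt.mp hc1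
        have hf1 := IH2 hcb
        have v1 : f (KK k + 1) = f (k - 1) := by rw [e1, v0, sgK1b k hcb]; ring
        have v2 : f (KK k + 2) = f (k - 1) - 1 := by rw [e2, v1, sgK2]; ring
        have v3 : f (KK k + 3) = f (k - 1) := by rw [e3, v2, sgK3]; ring
        have v4 : f (KK k + 4) = f (k - 1) - 1 := by rw [e4, v3, sgK4]; ring
        rcases (by omega : N = KK k ∨ N = KK k + 1 ∨ N = KK k + 2 ∨ N = KK k + 3
          ∨ N = KK k + 4) with h|h|h|h|h <;> subst h
        · exact ⟨by linarith, fun _ => by linarith⟩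
        · exact ⟨by linarith, fun _ => by linarith⟩
        · exact ⟨by linarith, fun h => absurd h (not_le.mpr (frK3 k))⟩
        · exact ⟨by linarith, fun _ => by linarith⟩
        · refine ⟨by linarith, fun h => ?_⟩
          rw [show KK k + 4 + 1 = KK (k+1) + 0 by omega] at h
          exact absurd h (not_le.mpr (frK0 (k+1)))
    · -- block ABBABAB
      have hc' : 2 - rr ≤ Int.fract ((k : ℝ) * rr) := not_lt.mp hc
      have hcb : 1/2 ≤ Int.fract ((k : ℝ) * rr) := le_trans half_le hc'
      have hf1 := IH2 hcb
      have hlen := KK_step_b k hc'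
      have hco : N < KK k + 7 := by omega
      have e5 : f (KK k + 5) = f (KK k + 4) + sg (KK k + 5) := by
        rw [show KK k + 5 = KK k + 4 + 1 by omega]; exact f_succ _
      have e6 : f (KK k + 6) = f (KK k + 5) + sg (KK k + 6) := by
        rw [show KK k + 6 = KK k + 5 + 1 by omega]; exact f_succ _
      have v1 : f (KK k + 1) = f (k - 1) := by rw [e1, v0, sgK1b k hcb]; ring
      have v2 : f (KK k + 2) = f (k - 1) - 1 := by rw [e2, v1, sgK2]; ring
      have v3 : f (KK k + 3) = f (k - 1) := by rw [e3, v2, sgK3]; ring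
      have v4 : f (KK k + 4) = f (k - 1) - 1 := by rw [e4, v3, sgK4]; ring
      have v5 : f (KK k + 5) = f (k - 1) := by rw [e5, v4, sgK5 k hc']; ring
      have v6 : f (KK k + 6) = f (k - 1) - 1 := by rw [e6, v5, sgK6 k hc']; ring
      rcases (by omega : N = KK k ∨ N = KK k + 1 ∨ N = KK k + 2 ∨ N = KK k + 3
        ∨ N = KK k + 4 ∨ N = KK k + 5 ∨ N = KK k + 6) with h|h|h|h|h|h|h <;> subst h
      · exact ⟨by linarith, fun _ => by linarith⟩
      · exact ⟨by linarith, fun _ => by linarith⟩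
      · exact ⟨by linarith, fun h => absurd h (not_le.mpr (frK3 k))⟩
      · exact ⟨by linarith, fun _ => by linarith⟩
      · exact ⟨by linarith, fun h => absurd h (not_le.mpr (frK5 k hc'))⟩
      · exact ⟨by linarith, fun _ => by linarith⟩
      · refine ⟨by linarith, fun h => ?_⟩
        rw [show KK k + 6 + 1 = KK (k+1) + 0 by omega] at h
        exact absurd h (not_le.mpr (frK0 (k+1)))

lemma rr_def : rr = Real.sqrt 2 := rfl

def Pp : ℕ → Prop := fun k => 0 < k ∧ Int.fract ((k : ℝ) * Real.sqrt 2) < 1 / 2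

def Qq : ℕ → Prop := fun k => 0 < k ∧ 1 / 2 ≤ Int.fract ((k : ℝ) * Real.sqrt 2)

noncomputable instance : DecidablePred Pp := fun _ => Classical.dec _
noncomputable instance : DecidablePred Qq := fun _ => Classical.dec _

lemma countPQ : ∀ N : ℕ, (Nat.count Pp (N+1) : ℤ) + (Nat.count Qq (N+1) : ℤ) = N
    ∧ (Nat.count Pp (N+1) : ℤ) - (Nat.count Qq (N+1) : ℤ) = f N := by
  intro N
  induction N with
  | zero =>
      have hp : ¬ Pp 0 := fun h => absurd h.1 (lt_irrefl 0)
      have hq : ¬ Qq 0 := fun h => absurd h.1 (lt_irrefl 0)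
      rw [Nat.count_succ, Nat.count_succ, Nat.count_zero, Nat.count_zero,
        if_neg hp, if_neg hq]
      norm_num [fval0]
  | succ N IH =>
      have hs : f (N+1) = f N + sg (N+1) := f_succ N
      rw [Nat.count_succ (p := Pp) (n := N+1), Nat.count_succ (p := Qq) (n := N+1)]
      by_cases hc : Int.fract (((N+1 : ℕ) : ℝ) * rr) < 1/2
      · have hp : Pp (N+1) := ⟨Nat.succ_pos N, by rw [← rr_def]; exact_mod_cast hc⟩
        have hq : ¬ Qq (N+1) := by
          intro h
          have := h.2
          rw [← rr_def] at this
          norm_num at this hc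
          linarith
        rw [if_pos hp, if_neg hq, hs]
        unfold sg
        rw [if_pos hc]
        push_cast
        constructor <;> linarith [IH.1, IH.2]
      · have hq : Qq (N+1) := ⟨Nat.succ_pos N, by
          rw [← rr_def]
          have := not_lt.mp hc
          norm_num at this ⊢
          linarith⟩
        have hp : ¬ Pp (N+1) := by
          intro h
          have := h.2
          rw [← rr_def] at this
          have h2 := not_lt.mp hc
          norm_num at this h2
          linarith
        rw [if_neg hp, if_pos hq, hs]
        unfold sg
        rw [if_neg hc]
        push_cast
        constructor <;> linarith [IH.1, IH.2]

lemma count_mono (M : ℕ) : Nat.count Qq M ≤ Nat.count Pp M := by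
  cases M with
  | zero => simp
  | succ N =>
      have h := countPQ N
      have h0 := (fmain N).1
      omega

lemma Q_inf : (setOf Qq).Infinite := by
  apply Set.infinite_of_not_bddAbove
  rw [not_bddAbove_iff]
  intro n
  set y : ℝ := ((n+1 : ℕ) : ℝ) * Real.sqrt 2 with hy
  have hirr : Irrational y := irrational_sqrt_two.natCast_mul (Nat.succ_ne_zero n)
  have hsub : Int.fract y = y - ⌊y⌋ := rfl
  have hx0 : 0 < Int.fract y := by
    rcases eq_or_lt_of_le (Int.fract_nonneg y) with h | h
    · exfalso
      apply hirr.ne_int ⌊y⌋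
      have : y - ⌊y⌋ = 0 := by rw [← hsub, ← h]
      linarith
    · exact h
  have hx1 : Int.fract y < 1 := Int.fract_lt_one y
  have hex : ∃ j : ℕ, 1/2 ≤ 2^j * Int.fract y := by
    obtain ⟨j, hj⟩ := pow_unbounded_of_one_lt (1 / Int.fract y) one_lt_two
    refine ⟨j, le_of_lt ?_⟩
    have h2 : (1:ℝ) < 2^j * Int.fract y := by
      rw [div_lt_iff₀ hx0] at hj
      linarith [mul_comm ((2:ℝ)^j) (Int.fract y)]
    linarith
  classical
  set j := Nat.find hex with hjdef
  have hj : 1/2 ≤ 2^j * Int.fract y := Nat.find_spec hex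
  have hlt1 : 2^j * Int.fract y < 1 := by
    match hj2 : j with
    | 0 => simpa using hx1
    | i + 1 =>
        have hm : ¬ (1/2 ≤ 2^i * Int.fract y) := Nat.find_min hex (by omega)
        push_neg at hm
        have : (2:ℝ)^(i+1) = 2 * 2^i := by ring
        rw [this]
        linarith
  refine ⟨2^j * (n+1), ?_, ?_⟩
  · constructor
    · positivity
    · have hcast : ((2^j * (n+1) : ℕ) : ℝ) * Real.sqrt 2
          = ((2^j * ⌊y⌋ : ℤ) : ℝ) + 2^j * Int.fract y := by
        rw [hsub]
        push_cast
        ring_nf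
        push_cast
        rw [hy]
        push_cast
        ring
      have hfr := fract_eval _ _ _ hcast (by linarith) hlt1
      rw [hfr]
      exact hj
  · have h1 : n + 1 ≤ 2^j * (n+1) := Nat.le_mul_of_pos_left (n+1) (by positivity)
    omega

theorem stmt_1' (n : ℕ) (hn : 1 ≤ n) :
    Nat.nth (fun k => 0 < k ∧ Int.fract ((k : ℝ) * Real.sqrt 2) < 1 / 2) (n - 1)
      < Nat.nth (fun k => 0 < k ∧ 1 / 2 ≤ Int.fract ((k : ℝ) * Real.sqrt 2)) (n - 1) := by
  show Nat.nth Pp (n-1) < Nat.nth Qq (n-1)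
  set i := n - 1
  set x := Nat.nth Qq i with hxdef
  have hqx : Qq x := Nat.nth_mem_of_infinite Q_inf i
  have hcnt : Nat.count Qq (x+1) = i+1 := by
    rw [Nat.count_succ, Nat.count_nth_of_infinite Q_inf, if_pos hqx]
  have hle : i + 1 ≤ Nat.count Pp (x+1) := by
    rw [← hcnt]; exact count_mono (x+1)
  have hlt : Nat.nth Pp i < x + 1 := Nat.nth_lt_of_lt_count (by omega)
  have hne : Nat.nth Pp i ≠ x := by
    intro he
    have hx0 : 0 < x := hqx.1
    have hnz : Nat.nth Pp i ≠ 0 := by rw [he]; omega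
    have hpx : Pp (Nat.nth Pp i) := Nat.nth_mem_of_ne_zero hnz
    rw [he] at hpx
    linarith [hpx.2, hqx.2]
  exact lt_of_le_of_ne (Nat.lt_succ_iff.mp hlt) hne


theorem stmt_1 (n : ℕ) (hn : 1 ≤ n) : a n < b n := by
  unfold a b
  exact stmt_1' n hn
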